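/- Perfect privacy of Shamir's scheme: for any subset T of at most k-1 evaluation points and any two secrets s, s' in Z_q, the distribution of the share vector {P(x_j)}_{j∈T}, where P is uniform among degree-at-most-(k-1) polynomials with constant term s, is identical to the corresponding distribution with constant term s'. -/

import Mathlib

open Polynomial

lemma map_equiv_uniform {α : Type*} [Fintype α] [Nonempty α] [DecidableEq α] (e : α ≃ α) :
    PMF.map e (PMF.uniformOfFintype α) = PMF.uniformOfFintype α := by
  ext b
  rw [PMF.map_apply]
  refine (tsum_eq_single (e.symm b) (fun a ha => if_neg (fun h => ha (by simp [h])))).trans ?_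
  simp [PMF.uniformOfFintype_apply]

theorem stmt4 (q k n : ℕ) [Fact q.Prime] (x : Fin n → ZMod q)
    (hx : Function.Injective x) (hx0 : ∀ j, x j ≠ 0)
    (T : Finset (Fin n)) (hT : T.card ≤ k - 1) (s s' : ZMod q) :
    PMF.map (fun a : Fin (k - 1) → ZMod q => fun j : T =>
        (Polynomial.C s +
          ∑ i, Polynomial.C (a i) * Polynomial.X ^ ((i : ℕ) + 1)).eval (x j))
      (PMF.uniformOfFintype (Fin (k - 1) → ZMod q)) =
    PMF.map (fun a : Fin (k - 1) → ZMod q => fun j : T =>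
        (Polynomial.C s' +
          ∑ i, Polynomial.C (a i) * Polynomial.X ^ ((i : ℕ) + 1)).eval (x j))
      (PMF.uniformOfFintype (Fin (k - 1) → ZMod q)) := by
  rcases T.eq_empty_or_nonempty with rfl | hTne
  · congr 1
    funext a
    funext j
    exact absurd j.2 (Finset.notMem_empty _)
  · -- T nonempty, so 1 ≤ T.card ≤ k - 1, hence k ≥ 2
    have hk1 : 1 ≤ k - 1 := le_trans (Finset.card_pos.mpr hTne) hT
    have hk : 2 ≤ k := by omega
    set nodes : Finset (ZMod q) := insert 0 (T.image x) with hnodes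
    have h0x : (0 : ZMod q) ∉ T.image x := by
      simp only [Finset.mem_image, not_exists]
      rintro j ⟨hj, hj0⟩
      exact hx0 j hj0
    classical
    set v : ZMod q → ZMod q := fun z => if z = 0 then 0 else s' - s with hv
    set R : Polynomial (ZMod q) := Lagrange.interpolate nodes id v with hR
    have hinj : Set.InjOn id (nodes : Set (ZMod q)) := Function.injective_id.injOn
    have hR0 : R.eval 0 = 0 := by
      have := Lagrange.eval_interpolate_at_node v hinj (Finset.mem_insert_self 0 (T.image x))
      simpa [hv, hR] using this
    have hRj : ∀ j ∈ T, R.eval (x j) = s' - s := by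
      intro j hj
      have hmem : x j ∈ nodes := Finset.mem_insert_of_mem (Finset.mem_image_of_mem x hj)
      have := Lagrange.eval_interpolate_at_node v hinj hmem
      simpa [hv, hR, hx0 j] using this
    have hdeg : R.natDegree < k := by
      rcases eq_or_ne R 0 with h | h
      · simp [h]; omega
      · have h1 : R.degree < (nodes.card : ℕ) := Lagrange.degree_interpolate_lt v hinj
        have h2 : nodes.card ≤ k := by
          rw [hnodes, Finset.card_insert_of_notMem h0x]
          have := Finset.card_image_le (s := T) (f := x)
          omega
        exact (Polynomial.natDegree_lt_iff_degree_lt h).mpr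
          (h1.trans_le (by exact_mod_cast h2))
    set c : Fin (k - 1) → ZMod q := fun i => R.coeff ((i : ℕ) + 1) with hc
    have hevalR : ∀ y : ZMod q, ∑ i : Fin (k - 1), c i * y ^ ((i : ℕ) + 1) = R.eval y := by
      intro y
      rw [Polynomial.eval_eq_sum_range' hdeg]
      have hk' : k = (k - 1) + 1 := by omega
      conv_rhs => rw [hk']
      rw [Finset.sum_range_succ']
      simp only [hc]
      rw [Fin.sum_univ_eq_sum_range (fun i => R.coeff (i + 1) * y ^ (i + 1))]
      have h0 : R.coeff 0 = 0 := by
        rw [Polynomial.coeff_zero_eq_eval_zero, hR0]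
      simp [h0]
    have key : (fun a : Fin (k - 1) → ZMod q => fun j : T =>
        (Polynomial.C s + ∑ i, Polynomial.C (a i) * Polynomial.X ^ ((i : ℕ) + 1)).eval (x j))
        ∘ (Equiv.addRight c) = (fun a : Fin (k - 1) → ZMod q => fun j : T =>
        (Polynomial.C s' + ∑ i, Polynomial.C (a i) * Polynomial.X ^ ((i : ℕ) + 1)).eval (x j)) := by
      funext a
      funext j
      simp only [Function.comp_apply, Equiv.coe_addRight, Polynomial.eval_add,
        Polynomial.eval_C, Polynomial.eval_finset_sum, Polynomial.eval_mul,
        Polynomial.eval_pow, Polynomial.eval_X, Pi.add_apply]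
      simp only [add_mul, Finset.sum_add_distrib]
      rw [hevalR (x j), hRj j j.2]
      ring
    calc PMF.map _ (PMF.uniformOfFintype (Fin (k - 1) → ZMod q))
        = PMF.map _ (PMF.map (Equiv.addRight c) (PMF.uniformOfFintype (Fin (k - 1) → ZMod q))) := by
          rw [map_equiv_uniform]
      _ = _ := by rw [PMF.map_comp, key]
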